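/- Let ρ0 and ρ1 be n×n complex density matrices, set F1 = √(√ρ1 · ρ0 · √ρ1) and F = Tr(F1), and assume F > 0. If ρ1 = (1/F)·F1, then Tr(P1 ρ0) = F², where P1 is the orthogonal projection onto the range of ρ1. -/

import Mathlib

open Matrix
open scoped ComplexOrder

/-- The positive semidefinite square root of a matrix (zero if the matrix is not
positive semidefinite). -/
noncomputable def msqrt {n : ℕ} (A : Matrix (Fin n) (Fin n) ℂ) : Matrix (Fin n) (Fin n) ℂ :=
  open scoped Classical in
  if h : A.PosSemidef then
    (h.1.eigenvectorUnitary : Matrix (Fin n) (Fin n) ℂ) *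
      diagonal ((↑) ∘ (fun i => Real.sqrt (h.1.eigenvalues i))) *
      (star h.1.eigenvectorUnitary : Matrix (Fin n) (Fin n) ℂ)
  else 0

/-- `P` is the orthogonal projection onto the range (support) of `A`. -/
def IsRangeProj {n : ℕ} (A P : Matrix (Fin n) (Fin n) ℂ) : Prop :=
  P.IsHermitian ∧ P * P = P ∧
    LinearMap.range P.mulVecLin = LinearMap.range A.mulVecLin

/-- Matrices with equal `mulVec` are equal. -/
lemma mat_ext_of_mulVec {n : ℕ} (A B : Matrix (Fin n) (Fin n) ℂ)
    (h : ∀ x, A.mulVec x = B.mulVec x) : A = B := by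
  ext i j
  have := congr_fun (h (Pi.single j 1)) i
  simpa [Matrix.mulVec_single_one] using this

lemma unit_diag_mul {n : ℕ} (U : Matrix (Fin n) (Fin n) ℂ)
    (hU : U ∈ Matrix.unitaryGroup (Fin n) ℂ) (f g : Fin n → ℝ) :
    (U * diagonal (fun i => (f i : ℂ)) * star U) * (U * diagonal (fun i => (g i : ℂ)) * star U)
      = U * diagonal (fun i => ((f i * g i : ℝ) : ℂ)) * star U := by
  have h1 : star U * U = 1 := (Matrix.mem_unitaryGroup_iff').mp hU
  calc (U * diagonal (fun i => (f i : ℂ)) * star U) *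
        (U * diagonal (fun i => (g i : ℂ)) * star U)
      = U * diagonal (fun i => (f i : ℂ)) * (star U * U) * diagonal (fun i => (g i : ℂ)) *
          star U := by simp only [Matrix.mul_assoc]
    _ = U * diagonal (fun i => ((f i * g i : ℝ) : ℂ)) * star U := by
        rw [h1, Matrix.mul_one, Matrix.mul_assoc U, Matrix.diagonal_mul_diagonal]
        congr 2
        funext i j
        simp [Matrix.diagonal_apply]

lemma msqrt_spec {n : ℕ} (A : Matrix (Fin n) (Fin n) ℂ) (hA : A.PosSemidef) :
    (msqrt A).PosSemidef ∧ msqrt A * msqrt A = A := by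
  have hd : msqrt A = (hA.1.eigenvectorUnitary : Matrix (Fin n) (Fin n) ℂ) *
      diagonal (fun i => ((Real.sqrt (hA.1.eigenvalues i) : ℝ) : ℂ)) *
      (star hA.1.eigenvectorUnitary : Matrix (Fin n) (Fin n) ℂ) := by
    unfold msqrt; rw [dif_pos hA]; rfl
  constructor
  · rw [hd]
    have hD : (diagonal (fun i => ((Real.sqrt (hA.1.eigenvalues i) : ℝ) : ℂ))).PosSemidef :=
      posSemidef_diagonal_iff.mpr (fun i => by exact_mod_cast Real.sqrt_nonneg _)
    exact hD.mul_mul_conjTranspose_same _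
  · rw [hd, unit_diag_mul _ (hA.1.eigenvectorUnitary).2]
    have he : (fun i => ((Real.sqrt (hA.1.eigenvalues i) * Real.sqrt (hA.1.eigenvalues i) : ℝ) : ℂ))
        = RCLike.ofReal ∘ hA.1.eigenvalues :=
      funext fun i => by simp [Real.mul_self_sqrt (hA.eigenvalues_nonneg i)]
    rw [he]
    conv_rhs => rw [hA.1.spectral_theorem]
    rfl

lemma unit_diag_herm {n : ℕ} (U : Matrix (Fin n) (Fin n) ℂ) (f : Fin n → ℝ) :
    (U * diagonal (fun i => (f i : ℂ)) * star U)ᴴ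
      = U * diagonal (fun i => (f i : ℂ)) * star U := by
  have h : (star U : Matrix (Fin n) (Fin n) ℂ) = Uᴴ := rfl
  have h2 : star (fun i => (f i : ℂ)) = (fun i => (f i : ℂ)) := by
    funext i
    exact Complex.conj_ofReal (f i)
  rw [h, conjTranspose_mul, conjTranspose_mul, conjTranspose_conjTranspose,
    diagonal_conjTranspose, h2, Matrix.mul_assoc]

lemma range_mul_le {n : ℕ} (A B : Matrix (Fin n) (Fin n) ℂ) :
    LinearMap.range (A * B).mulVecLin ≤ LinearMap.range A.mulVecLin := by
  rw [Matrix.mulVecLin_mul]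
  exact LinearMap.range_comp_le_range _ _

lemma idem_fix {n : ℕ} (A B : Matrix (Fin n) (Fin n) ℂ) (hA : A * A = A)
    (hle : LinearMap.range B.mulVecLin ≤ LinearMap.range A.mulVecLin) : A * B = B := by
  apply mat_ext_of_mulVec
  intro x
  have hx : B.mulVec x ∈ LinearMap.range A.mulVecLin := hle ⟨x, rfl⟩
  obtain ⟨y, hy⟩ := hx
  simp only [Matrix.mulVecLin_apply] at hy
  calc (A * B).mulVec x = A.mulVec (B.mulVec x) := by rw [← Matrix.mulVec_mulVec]
    _ = A.mulVec (A.mulVec y) := by rw [hy]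
    _ = (A * A).mulVec y := by rw [Matrix.mulVec_mulVec]
    _ = A.mulVec y := by rw [hA]
    _ = B.mulVec x := hy

/-- If `ρ1 = (1/F)·F1` with `F = Tr(F1) > 0`, then `Tr(P1 ρ0) = F²`. -/
theorem trace_proj_eq_fidelity_sq {n : ℕ}
    (ρ0 ρ1 P1 : Matrix (Fin n) (Fin n) ℂ)
    (hρ0 : ρ0.PosSemidef) (hρ0tr : ρ0.trace = 1)
    (hρ1 : ρ1.PosSemidef) (hρ1tr : ρ1.trace = 1)
    (hP1 : IsRangeProj ρ1 P1)
    (hF : 0 < (msqrt (msqrt ρ1 * ρ0 * msqrt ρ1)).trace.re)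
    (hprop : ρ1 = (((msqrt (msqrt ρ1 * ρ0 * msqrt ρ1)).trace.re : ℝ) : ℂ)⁻¹ •
      msqrt (msqrt ρ1 * ρ0 * msqrt ρ1)) :
    (P1 * ρ0).trace.re = ((msqrt (msqrt ρ1 * ρ0 * msqrt ρ1)).trace.re) ^ 2 := by
  classical
  set S := msqrt ρ1 with hSdef
  have hS : S.PosSemidef := (msqrt_spec ρ1 hρ1).1
  have hSS : S * S = ρ1 := (msqrt_spec ρ1 hρ1).2
  have hM : (S * ρ0 * S).PosSemidef := by
    have := hρ0.mul_mul_conjTranspose_same S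
    rwa [hS.1.eq] at this
  set F1 := msqrt (S * ρ0 * S) with hF1def
  have hF1sq : F1 * F1 = S * ρ0 * S := (msqrt_spec _ hM).2
  set F : ℝ := F1.trace.re with hFdef
  have hFne : (F : ℂ) ≠ 0 := Complex.ofReal_ne_zero.mpr (ne_of_gt hF)
  have hF1ρ : F1 = (F : ℂ) • ρ1 := by
    rw [hprop, smul_smul, mul_inv_cancel₀ hFne, one_smul]
  have hkey : S * ρ0 * S = ((F : ℂ) ^ 2) • (ρ1 * ρ1) := by
    rw [← hF1sq, hF1ρ, Matrix.smul_mul, Matrix.mul_smul, smul_smul, sq]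
  -- spectral decomposition of S, with opaque unitary and eigenvalues
  obtain ⟨U, hU, e, hspec⟩ : ∃ U ∈ Matrix.unitaryGroup (Fin n) ℂ, ∃ e : Fin n → ℝ,
      S = U * diagonal (fun i => (e i : ℂ)) * star U :=
    ⟨hS.1.eigenvectorUnitary, (hS.1.eigenvectorUnitary).2, hS.1.eigenvalues,
      hS.1.spectral_theorem⟩
  set T : Matrix (Fin n) (Fin n) ℂ := U * diagonal (fun i => (((e i)⁻¹ : ℝ) : ℂ)) * star U
    with hTdef
  set q : Fin n → ℝ := fun i => (e i)⁻¹ * e i with hqdef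
  set Q : Matrix (Fin n) (Fin n) ℂ := U * diagonal (fun i => ((q i : ℝ) : ℂ)) * star U
    with hQdef
  have hq1 : (fun i => ((e i * (e i)⁻¹ : ℝ) : ℂ)) = (fun i => ((q i : ℝ) : ℂ)) := by
    funext i; rw [hqdef, mul_comm]
  have hqq : ∀ i, q i * q i = q i := by
    intro i
    by_cases h : e i = 0
    · simp [hqdef, h]
    · simp [hqdef, inv_mul_cancel₀ h]
  have hqe : ∀ i, q i * e i = e i := by
    intro i
    by_cases h : e i = 0
    · simp [hqdef, h]
    · simp [hqdef, inv_mul_cancel₀ h]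
  have hq2 : (fun i => ((q i * q i : ℝ) : ℂ)) = (fun i => ((q i : ℝ) : ℂ)) := by
    funext i; rw [hqq i]
  have hq3 : (fun i => ((q i * e i : ℝ) : ℂ)) = (fun i => ((e i : ℝ) : ℂ)) := by
    funext i; rw [hqe i]
  have hq4 : (fun i => ((e i * q i : ℝ) : ℂ)) = (fun i => ((e i : ℝ) : ℂ)) := by
    funext i; rw [mul_comm, hqe i]
  have hTS : T * S = Q := by
    rw [hQdef, hTdef, hspec, unit_diag_mul U hU]
  have hST : S * T = Q := by
    rw [hQdef, hTdef, hspec, unit_diag_mul U hU, hq1]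
  have hQQ : Q * Q = Q := by
    rw [hQdef, unit_diag_mul U hU, hq2]
  have hQS : Q * S = S := by
    rw [hQdef, hspec, unit_diag_mul U hU, hq3]
  have hSQ : S * Q = S := by
    rw [hQdef, hspec, unit_diag_mul U hU, hq4]
  have hQH : Qᴴ = Q := by rw [hQdef]; exact unit_diag_herm U q
  -- range equalities
  have hSTρ : S = ρ1 * T := by
    rw [← hSS, Matrix.mul_assoc, hST, hSQ]
  have hrSρ : LinearMap.range S.mulVecLin = LinearMap.range ρ1.mulVecLin := by
    apply le_antisymm
    · conv_lhs => rw [hSTρ]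
      exact range_mul_le _ _
    · conv_lhs => rw [← hSS]
      exact range_mul_le _ _
  have hrQS : LinearMap.range Q.mulVecLin = LinearMap.range S.mulVecLin := by
    apply le_antisymm
    · conv_lhs => rw [← hST]
      exact range_mul_le _ _
    · conv_lhs => rw [← hQS]
      exact range_mul_le _ _
  obtain ⟨hP1H, hP1idem, hP1range⟩ := hP1
  have hrange : LinearMap.range P1.mulVecLin = LinearMap.range Q.mulVecLin := by
    rw [hP1range, hrQS, hrSρ]
  have h1 : P1 * Q = Q := idem_fix P1 Q hP1idem (le_of_eq hrange.symm)
  have h2 : Q * P1 = P1 := idem_fix Q P1 hQQ (le_of_eq hrange)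
  have hPQ : P1 = Q := by
    have h3 := congrArg conjTranspose h1
    rw [conjTranspose_mul, hQH, hP1H.eq] at h3
    rw [← h2, h3]
  -- trace computation
  have hQρQ : Q * ρ0 * Q = ((F : ℂ) ^ 2) • ρ1 := by
    calc Q * ρ0 * Q = T * (S * ρ0 * S) * T := by
          nth_rewrite 1 [← hTS]
          rw [← hST]
          simp only [Matrix.mul_assoc]
      _ = ((F : ℂ) ^ 2) • (T * (ρ1 * ρ1) * T) := by
          rw [hkey, Matrix.mul_smul, Matrix.smul_mul]
      _ = ((F : ℂ) ^ 2) • ρ1 := by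
          congr 1
          conv_lhs => rw [← hSS]
          calc T * (S * S * (S * S)) * T = (T * S) * (S * (S * (S * T))) := by
                simp only [Matrix.mul_assoc]
            _ = Q * (S * (S * Q)) := by rw [hTS, hST]
            _ = Q * (S * S) := by rw [hSQ]
            _ = (Q * S) * S := by rw [← Matrix.mul_assoc]
            _ = ρ1 := by rw [hQS, hSS]
  have htr : (P1 * ρ0).trace = (F : ℂ) ^ 2 := by
    rw [hPQ]
    calc (Q * ρ0).trace = (Q * Q * ρ0).trace := by rw [hQQ]
      _ = (Q * ρ0 * Q).trace := (trace_mul_cycle Q ρ0 Q).symm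
      _ = (((F : ℂ) ^ 2) • ρ1).trace := by rw [hQρQ]
      _ = (F : ℂ) ^ 2 := by rw [trace_smul, hρ1tr, smul_eq_mul, mul_one]
  rw [htr, ← Complex.ofReal_pow, Complex.ofReal_re]
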